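/- Two based finite trees Λ and Λ' are isomorphic as based graphs if and only if their barycentric subdivisions sd Λ and sd Λ', regarded as based categories (posets), are equivalent as based categories. -/

import Mathlib

/-- The barycentric subdivision of a graph `G`, as a partially ordered set (hence a category):
its elements are the vertices of `G` together with a barycenter for each edge, and the barycenter
of an edge `{u,v}` lies below `u` and below `v`. -/
def Sd {V : Type} (G : SimpleGraph V) : Type := G.edgeSet ⊕ V

instance {V : Type} (G : SimpleGraph V) : PartialOrder (Sd G) where
  le x y := x = y ∨ ∃ (e : G.edgeSet) (v : V), x = Sum.inl e ∧ y = Sum.inr v ∧ v ∈ (e : Sym2 V)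
  le_refl x := Or.inl rfl
  le_trans x y z h₁ h₂ := by
    rcases h₁ with rfl | ⟨e, v, rfl, rfl, hv⟩
    · exact h₂
    · rcases h₂ with rfl | ⟨e', v', h, _, _⟩
      · exact Or.inr ⟨e, v, rfl, rfl, hv⟩
      · exact absurd h (by simp)
  le_antisymm x y h₁ h₂ := by
    rcases h₁ with rfl | ⟨e, v, rfl, rfl, hv⟩
    · rfl
    · rcases h₂ with h | ⟨e', v', h, h', _⟩
      · exact h.symm
      · exact absurd h' (by simp)

namespace SdAux

variable {V V' : Type} {G : SimpleGraph V} {G' : SimpleGraph V'}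

lemma le_def {x y : Sd G} : x ≤ y ↔
    x = y ∨ ∃ (e : G.edgeSet) (v : V), x = Sum.inl e ∧ y = Sum.inr v ∧ v ∈ (e : Sym2 V) :=
  Iff.rfl

/-- The barycenter of an edge, as an element of `Sd G`. -/
def bar (e : G.edgeSet) : Sd G := Sum.inl e

/-- A vertex, as an element of `Sd G`. -/
def vert (v : V) : Sd G := Sum.inr v

lemma sd_cases (x : Sd G) : (∃ e, x = bar e) ∨ (∃ v, x = vert v) :=
  Sum.casesOn x (fun e => Or.inl ⟨e, rfl⟩) (fun v => Or.inr ⟨v, rfl⟩)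

lemma inl_ne_inr {e : G.edgeSet} {v : V} : bar (G := G) e ≠ vert v :=
  fun h => Sum.inl_ne_inr h

lemma inl_le_inr_iff {e : G.edgeSet} {v : V} :
    bar (G := G) e ≤ vert v ↔ v ∈ (e : Sym2 V) := by
  constructor
  · rintro (h | ⟨e', v', h1, h2, h3⟩)
    · exact absurd h inl_ne_inr
    · cases Sum.inl.inj h1
      cases Sum.inr.inj h2
      exact h3
  · intro h
    exact Or.inr ⟨e, v, rfl, rfl, h⟩

lemma inl_le_inl_iff {e e' : G.edgeSet} : bar (G := G) e ≤ bar e' ↔ e = e' := by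
  constructor
  · rintro (h | ⟨e₂, v₂, h1, h2, h3⟩)
    · exact Sum.inl.inj h
    · exact absurd h2 Sum.inl_ne_inr
  · rintro rfl; exact le_refl _

lemma not_inr_le_inl {v : V} {e : G.edgeSet} : ¬ (vert (G := G) v ≤ bar e) := by
  rintro (h | ⟨e₂, v₂, h1, h2, h3⟩)
  · exact Sum.inr_ne_inl h
  · exact Sum.inr_ne_inl h1

lemma inr_le_inr_iff {v v' : V} : vert (G := G) v ≤ vert v' ↔ v = v' := by
  constructor
  · rintro (h | ⟨e₂, v₂, h1, h2, h3⟩)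
    · exact Sum.inr.inj h
    · exact absurd h1 Sum.inr_ne_inl
  · rintro rfl; exact le_refl _

lemma isMax_iff {x : Sd G} : IsMax x ↔ ∃ v : V, x = vert v := by
  constructor
  · intro h
    rcases sd_cases x with ⟨e, rfl⟩ | hv
    · exfalso
      have hv : (e : Sym2 V).out.1 ∈ (e : Sym2 V) := Sym2.out_fst_mem _
      have hle : bar e ≤ vert (e : Sym2 V).out.1 := inl_le_inr_iff.2 hv
      exact not_inr_le_inl (h hle)
    · exact hv
  · rintro ⟨v, rfl⟩ y hy
    rcases le_def.1 hy with rfl | ⟨e, w, h, _, _⟩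
    · exact le_refl _
    · exact absurd h (fun h => Sum.inr_ne_inl h)

lemma adj_iff {u w : V} : G.Adj u w ↔
    u ≠ w ∧ ∃ x : Sd G, x < vert u ∧ x < vert w := by
  constructor
  · intro h
    refine ⟨h.ne, bar ⟨s(u, w), h⟩, ?_, ?_⟩
    · exact lt_of_le_of_ne (inl_le_inr_iff.2 (Sym2.mem_mk_left u w)) inl_ne_inr
    · exact lt_of_le_of_ne (inl_le_inr_iff.2 (Sym2.mem_mk_right u w)) inl_ne_inr
  · rintro ⟨hne, x, h1, h2⟩
    rcases sd_cases x with ⟨e, rfl⟩ | ⟨v, rfl⟩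
    · have hu : u ∈ (e : Sym2 V) := inl_le_inr_iff.1 h1.le
      have hw : w ∈ (e : Sym2 V) := inl_le_inr_iff.1 h2.le
      have he : (e : Sym2 V) = s(u, w) := (Sym2.mem_and_mem_iff hne).1 ⟨hu, hw⟩
      exact G.mem_edgeSet.1 (he ▸ e.2)
    · exact absurd (inr_le_inr_iff.1 h1.le) (fun h => h1.ne (by rw [h]))

lemma iso_isMax (φ : Sd G ≃o Sd G') {x : Sd G} (h : IsMax x) : IsMax (φ x) := by
  intro y hy
  have h1 : x ≤ φ.symm y := by
    rw [← φ.le_iff_le, φ.apply_symm_apply]; exact hy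
  have h2 := h h1
  calc y = φ (φ.symm y) := (φ.apply_symm_apply y).symm
    _ ≤ φ x := φ.monotone h2

lemma exists_vmap (φ : Sd G ≃o Sd G') (v : V) : ∃ w : V', φ (vert v) = vert w :=
  isMax_iff.1 (iso_isMax φ (isMax_iff.2 ⟨v, rfl⟩))

noncomputable def vmap (φ : Sd G ≃o Sd G') (v : V) : V' := (exists_vmap φ v).choose

lemma vmap_spec (φ : Sd G ≃o Sd G') (v : V) : φ (vert v) = vert (vmap φ v) :=
  (exists_vmap φ v).choose_spec

lemma vmap_symm (φ : Sd G ≃o Sd G') (v : V) : vmap φ.symm (vmap φ v) = v := by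
  have : (vert (vmap φ.symm (vmap φ v)) : Sd G) = vert v := by
    rw [← vmap_spec, ← vmap_spec, OrderIso.symm_apply_apply]
  exact Sum.inr.inj this

lemma vmap_symm' (φ : Sd G ≃o Sd G') (v : V') : vmap φ (vmap φ.symm v) = v := by
  have : (vert (vmap φ (vmap φ.symm v)) : Sd G') = vert v := by
    rw [← vmap_spec, ← vmap_spec, OrderIso.apply_symm_apply]
  exact Sum.inr.inj this

lemma vmap_inj (φ : Sd G ≃o Sd G') {u w : V} (h : vmap φ u = vmap φ w) : u = w := by
  have : φ (vert u) = φ (vert w) := by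
    rw [vmap_spec, vmap_spec, h]
  exact Sum.inr.inj (φ.injective this)

noncomputable def isoOfOrderIso (φ : Sd G ≃o Sd G') : G ≃g G' where
  toFun := vmap φ
  invFun := vmap φ.symm
  left_inv := vmap_symm φ
  right_inv := vmap_symm' φ
  map_rel_iff' := by
    intro u w
    rw [Equiv.coe_fn_mk, adj_iff, adj_iff]
    constructor
    · rintro ⟨hne, y, h1, h2⟩
      refine ⟨fun h => hne (by rw [h]), φ.symm y, ?_, ?_⟩
      · rw [← vmap_spec] at h1
        have : φ (φ.symm y) < φ (vert u) := by
          rw [φ.apply_symm_apply]; exact h1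
        exact φ.lt_iff_lt.1 this
      · rw [← vmap_spec] at h2
        have : φ (φ.symm y) < φ (vert w) := by
          rw [φ.apply_symm_apply]; exact h2
        exact φ.lt_iff_lt.1 this
    · rintro ⟨hne, x, h1, h2⟩
      refine ⟨fun h => hne (vmap_inj φ h), φ x, ?_, ?_⟩
      · rw [← vmap_spec]; exact φ.strictMono h1
      · rw [← vmap_spec]; exact φ.strictMono h2

lemma mem_mapEdgeSet_iff (f : G ≃g G') {e : G.edgeSet} {v : V} :
    f v ∈ (f.mapEdgeSet e : Sym2 V') ↔ v ∈ (e : Sym2 V) := by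
  have : (f.mapEdgeSet e : Sym2 V') = Sym2.map f (e : Sym2 V) := rfl
  rw [this, Sym2.mem_map]
  constructor
  · rintro ⟨a, ha, hfa⟩
    rwa [← f.injective hfa]
  · intro h
    exact ⟨v, h, rfl⟩

def orderIsoOfIso (f : G ≃g G') : Sd G ≃o Sd G' where
  toEquiv := Equiv.sumCongr f.mapEdgeSet f.toEquiv
  map_rel_iff' := by
    intro x y
    rcases sd_cases x with ⟨e, rfl⟩ | ⟨v, rfl⟩ <;>
      rcases sd_cases y with ⟨e', rfl⟩ | ⟨v', rfl⟩
    · show bar (f.mapEdgeSet e) ≤ bar (f.mapEdgeSet e') ↔ _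
      rw [inl_le_inl_iff, inl_le_inl_iff, f.mapEdgeSet.apply_eq_iff_eq]
    · show bar (f.mapEdgeSet e) ≤ vert (f v') ↔ _
      rw [inl_le_inr_iff, inl_le_inr_iff, mem_mapEdgeSet_iff]
    · show vert (f v) ≤ bar (f.mapEdgeSet e') ↔ _
      exact iff_of_false not_inr_le_inl not_inr_le_inl
    · show vert (f v) ≤ vert (f v') ↔ _
      rw [inr_le_inr_iff, inr_le_inr_iff]
      exact ⟨fun h => f.injective h, fun h => by rw [h]⟩

end SdAux

/-- Two based finite trees `Λ` and `Λ'` are isomorphic as based graphs if and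
only if their barycentric subdivisions `sd Λ` and `sd Λ'`, regarded as based categories (posets),
are equivalent as based categories (an equivalence of categories whose functor sends the base
object to the base object). -/
theorem stmt14 {V V' : Type} [Fintype V] [Fintype V']
    (Λ : SimpleGraph V) (Λ' : SimpleGraph V')
    (hΛ : Λ.IsTree) (hΛ' : Λ'.IsTree) (b : V) (b' : V') :
    (∃ e : Λ ≃g Λ', e b = b') ↔
      ∃ E : CategoryTheory.Equivalence (Sd Λ) (Sd Λ'),
        E.functor.obj (Sum.inr b) = Sum.inr b' := by
  constructor
  · rintro ⟨f, hf⟩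
    refine ⟨(SdAux.orderIsoOfIso f).equivalence, ?_⟩
    show (Sum.inr (f b) : Sd Λ') = Sum.inr b'
    rw [hf]
  · rintro ⟨E, hE⟩
    refine ⟨SdAux.isoOfOrderIso E.toOrderIso, ?_⟩
    show SdAux.vmap E.toOrderIso b = b'
    have h := SdAux.vmap_spec E.toOrderIso b
    rw [CategoryTheory.Equivalence.toOrderIso_apply] at h
    exact (Sum.inr.inj (hE.symm.trans h)).symm
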